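/- Let S be a signed graph with n×n adjacency matrix A₀ whose eigenvalues, listed with multiplicity, are θ₁,…,θ_n, let p, q ≥ 1, and let B = [[0_p, J_{p×q}],[J_{q×p}, 0_q]] be the adjacency matrix of (K_{p,q},+). Let A be the adjacency matrix of S ⋆ₛ (K_{p,q},+). Then for every real t such that tI_{p+q} − B is invertible, det(tI_{n(p+q+1)} − A) = t^{n(p+q−2)} · ∏_{i=1}^{n} ((t² − pq)(t − θᵢ) − ((p+q)t + 2pq)θᵢ²). -/

import Mathlib

open Matrix BigOperators Kronecker

/-- A signed graph on vertex set `V` is represented by its adjacency matrix: a real symmetric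
matrix with zero diagonal and all entries in `{-1, 0, 1}`. -/
def IsSignedAdj {V : Type*} (A : Matrix V V ℝ) : Prop :=
  A.IsHermitian ∧ (∀ i, A i i = 0) ∧ ∀ i j, A i j = -1 ∨ A i j = 0 ∨ A i j = 1

/-- The adjacency matrix of the s-neighbourhood corona `S₁ ⋆ₛ S₂`:
the block matrix `[[A₁, jᵀ ⊗ A₁], [(jᵀ ⊗ A₁)ᵀ, A₂ ⊗ I]]`, indexed by `Fin n₁ ⊕ (V × Fin n₁)`. -/
def coronaAdj {n₁ : ℕ} {V : Type*} [DecidableEq V]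
    (A₁ : Matrix (Fin n₁) (Fin n₁) ℝ) (A₂ : Matrix V V ℝ) :
    Matrix (Fin n₁ ⊕ V × Fin n₁) (Fin n₁ ⊕ V × Fin n₁) ℝ :=
  Matrix.fromBlocks A₁ (Matrix.of fun i p => A₁ i p.2) (Matrix.of fun p j => A₁ p.2 j)
    (A₂ ⊗ₖ (1 : Matrix (Fin n₁) (Fin n₁) ℝ))

/-- The adjacency matrix of `(K_{p,q}, +)`, the all-positive complete bipartite signed graph:
the block matrix `[[0, J], [J, 0]]`. -/
def posKpq (p q : ℕ) : Matrix (Fin p ⊕ Fin q) (Fin p ⊕ Fin q) ℝ :=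
  Matrix.fromBlocks 0 (Matrix.of fun _ _ => 1) (Matrix.of fun _ _ => 1) 0

/- ---------- auxiliary lemmas ---------- -/

private def auxU (p q : ℕ) : Matrix (Fin p ⊕ Fin q) (Fin 2) ℝ :=
  Matrix.of fun i k => match i, k with
    | Sum.inl _, 0 => 1
    | Sum.inr _, 1 => 1
    | _, _ => 0

private def auxV (p q : ℕ) : Matrix (Fin 2) (Fin p ⊕ Fin q) ℝ :=
  Matrix.of fun k i => match k, i with
    | 0, Sum.inr _ => 1
    | 1, Sum.inl _ => 1
    | _, _ => 0

private lemma posKpq_eq_mul (p q : ℕ) : posKpq p q = auxU p q * auxV p q := by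
  ext (a|a) (b|b) <;>
    simp [posKpq, auxU, auxV, Matrix.mul_apply, Fin.sum_univ_two, fromBlocks]

private lemma auxVU (p q : ℕ) : auxV p q * auxU p q = !![0, (q:ℝ); (p:ℝ), 0] := by
  ext k l
  fin_cases k <;> fin_cases l <;>
    simp [auxU, auxV, Matrix.mul_apply, Fintype.sum_sum_type]

private lemma det_posKpq {p q : ℕ} (hp : 1 ≤ p) (hq : 1 ≤ q) (t : ℝ) :
    (t • (1 : Matrix (Fin p ⊕ Fin q) (Fin p ⊕ Fin q) ℝ) - posKpq p q).det
      = t ^ (p + q - 2) * (t ^ 2 - p * q) := by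
  rcases eq_or_ne t 0 with rfl | ht
  · rw [zero_smul, zero_sub, Matrix.det_neg]
    rcases Nat.lt_or_ge (p + q) 3 with h | h
    · have hp1 : p = 1 := by omega
      have hq1 : q = 1 := by omega
      subst hp1; subst hq1
      rw [← Matrix.det_submatrix_equiv_self
        ⟨![Sum.inl 0, Sum.inr 0], Sum.elim (fun _ => (0 : Fin 2)) (fun _ => 1),
          by decide, by decide⟩, Matrix.det_fin_two]
      simp [posKpq]
    · have hz : (posKpq p q).det = 0 := by
        rcases Nat.lt_or_ge p 2 with h2 | h2
        · have : 2 ≤ q := by omega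
          apply Matrix.det_zero_of_row_eq (i := Sum.inr ⟨0, by omega⟩) (j := Sum.inr ⟨1, by omega⟩)
          · simp [Fin.ext_iff]
          · ext (a|b) <;> simp [posKpq]
        · apply Matrix.det_zero_of_row_eq (i := Sum.inl ⟨0, by omega⟩) (j := Sum.inl ⟨1, by omega⟩)
          · simp [Fin.ext_iff]
          · ext (a|b) <;> simp [posKpq]
      rw [hz, mul_zero]
      have : (0:ℝ) ^ (p + q - 2) = 0 := by
        apply zero_pow; omega
      rw [this, zero_mul]
  · have key : t • (1 : Matrix (Fin p ⊕ Fin q) (Fin p ⊕ Fin q) ℝ) - posKpq p q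
        = t • (1 + auxU p q * ((-t⁻¹) • auxV p q)) := by
      rw [smul_add, posKpq_eq_mul, Matrix.mul_smul, smul_smul, mul_neg,
        mul_inv_cancel₀ ht, neg_smul, one_smul, ← sub_eq_add_neg]
    rw [key, Matrix.det_smul, Matrix.det_one_add_mul_comm]
    have h2 : ((-t⁻¹) • auxV p q) * auxU p q = (-t⁻¹) • !![0, (q:ℝ); (p:ℝ), 0] := by
      rw [Matrix.smul_mul, auxVU]
    rw [h2]
    have h3 : (1 + (-t⁻¹) • !![0, (q:ℝ); (p:ℝ), 0] : Matrix (Fin 2) (Fin 2) ℝ).det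
        = 1 - p * q / t ^ 2 := by
      rw [Matrix.det_fin_two]
      simp [Matrix.one_apply]
      field_simp
    rw [h3]
    have hcard : Fintype.card (Fin p ⊕ Fin q) = p + q := by simp
    rw [hcard]
    have : p + q = (p + q - 2) + 2 := by omega
    rw [this, pow_add]
    field_simp
    ring
    rw [Nat.add_sub_cancel_left]

private lemma sum_inv_posKpq {p q : ℕ} (t : ℝ)
    (hne : t ^ 2 - (p:ℝ) * q ≠ 0)
    (hinv : IsUnit (t • (1 : Matrix (Fin p ⊕ Fin q) (Fin p ⊕ Fin q) ℝ) - posKpq p q).det) :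
    ∑ v, ∑ w, (t • (1 : Matrix (Fin p ⊕ Fin q) (Fin p ⊕ Fin q) ℝ) - posKpq p q)⁻¹ v w
      = (((p:ℝ) + q) * t + 2 * p * q) / (t ^ 2 - p * q) := by
  set M := t • (1 : Matrix (Fin p ⊕ Fin q) (Fin p ⊕ Fin q) ℝ) - posKpq p q with hM
  set x : Fin p ⊕ Fin q → ℝ :=
    Sum.elim (fun _ => (t + q) / (t ^ 2 - p * q)) (fun _ => (t + p) / (t ^ 2 - p * q)) with hx
  have hMx : M *ᵥ x = fun _ => 1 := by
    funext i
    have hMapp : ∀ i j, M i j = t * (if i = j then 1 else 0) - posKpq p q i j := by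
      intro i j
      simp [hM, Matrix.sub_apply, Matrix.one_apply]
    rcases i with a | b
    case inl =>
      rw [show (1:ℝ) = (fun _ : Fin p ⊕ Fin q => (1:ℝ)) (Sum.inl a) from rfl]
      simp only [Matrix.mulVec, dotProduct]
      rw [Fintype.sum_sum_type]
      simp [hMapp, posKpq, hx, sub_mul, ite_mul, mul_ite, Finset.sum_ite_eq,
        Finset.sum_ite_eq', Finset.sum_sub_distrib]
      field_simp
      ring
      rw [mul_comm (q:ℝ) p, ← sub_mul, mul_inv_cancel₀ hne]
    case inr =>
      rw [show (1:ℝ) = (fun _ : Fin p ⊕ Fin q => (1:ℝ)) (Sum.inr b) from rfl]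
      simp only [Matrix.mulVec, dotProduct]
      rw [Fintype.sum_sum_type]
      simp [hMapp, posKpq, hx, sub_mul, ite_mul, mul_ite, Finset.sum_ite_eq,
        Finset.sum_ite_eq', Finset.sum_sub_distrib]
      field_simp
      ring
  have hxeq : M⁻¹ *ᵥ (fun _ => 1) = x := by
    rw [← hMx, Matrix.mulVec_mulVec, Matrix.nonsing_inv_mul _ hinv, Matrix.one_mulVec]
  have hsum : ∀ v, ∑ w, M⁻¹ v w = x v := by
    intro v
    have := congrFun hxeq v
    simpa [Matrix.mulVec, dotProduct] using this
  simp only [hsum]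
  rw [Fintype.sum_sum_type]
  simp only [hx, Sum.elim_inl, Sum.elim_inr, Finset.sum_const, Finset.card_univ,
    Fintype.card_fin, nsmul_eq_mul]
  field_simp
  ring

private lemma sub_kron_one {V : Type*} [Fintype V] [DecidableEq V] {n : ℕ} (t : ℝ)
    (B : Matrix V V ℝ) :
    (t • (1 : Matrix V V ℝ) - B) ⊗ₖ (1 : Matrix (Fin n) (Fin n) ℝ)
      = t • (1 : Matrix (V × Fin n) (V × Fin n) ℝ)
        - B ⊗ₖ (1 : Matrix (Fin n) (Fin n) ℝ) := by
  ext ⟨v, k⟩ ⟨w, l⟩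
  simp [Matrix.kroneckerMap_apply, Matrix.one_apply, Prod.ext_iff, sub_mul,
    mul_ite, ite_mul, ite_and]
  split <;> split <;> simp

private lemma corner_prod {n : ℕ} {V : Type*} [Fintype V] [DecidableEq V]
    (A : Matrix (Fin n) (Fin n) ℝ) (N : Matrix V V ℝ) :
    (Matrix.of fun i (p : V × Fin n) => A i p.2) *
      (N ⊗ₖ (1 : Matrix (Fin n) (Fin n) ℝ)) *
      (Matrix.of fun (p : V × Fin n) j => A p.2 j)
      = (∑ v, ∑ w, N v w) • (A * A) := by
  ext i j
  simp only [Matrix.mul_apply, Matrix.of_apply, Matrix.kroneckerMap_apply,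
    Matrix.smul_apply, smul_eq_mul, Fintype.sum_prod_type, Matrix.one_apply,
    mul_ite, mul_one, mul_zero, ite_mul, zero_mul, Finset.sum_ite_eq,
    Finset.sum_ite_eq', Finset.mem_univ, if_true]
  rw [Finset.sum_comm]
  simp only [← Finset.sum_mul, Finset.mul_sum, Finset.sum_mul]
  apply Finset.sum_congr rfl
  intro x _
  rw [Finset.sum_comm]
  apply Finset.sum_congr rfl
  intro v _
  apply Finset.sum_congr rfl
  intro w _
  ring

private lemma det_shift {n : ℕ} {A : Matrix (Fin n) (Fin n) ℝ} (hA : A.IsHermitian) (t s : ℝ) :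
    (t • (1 : Matrix (Fin n) (Fin n) ℝ) - A - s • (A * A)).det
      = ∏ i, (t - hA.eigenvalues i - s * hA.eigenvalues i ^ 2) := by
  set U : Matrix (Fin n) (Fin n) ℝ := (hA.eigenvectorUnitary : Matrix (Fin n) (Fin n) ℝ) with hU
  set D : Matrix (Fin n) (Fin n) ℝ := Matrix.diagonal hA.eigenvalues with hD
  have hUU : U * star U = 1 := by
    have := hA.eigenvectorUnitary.prop
    rw [Matrix.mem_unitaryGroup_iff] at this
    exact this
  have hUU' : star U * U = 1 := Matrix.UnitaryGroup.star_mul_self hA.eigenvectorUnitary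
  have hspec : A = U * D * star U := by
    have := hA.spectral_theorem
    rwa [RCLike.ofReal_real_eq_id, Function.id_comp] at this
  have key : t • (1 : Matrix (Fin n) (Fin n) ℝ) - A - s • (A * A)
      = U * (t • (1 : Matrix (Fin n) (Fin n) ℝ) - D - s • (D * D)) * star U := by
    rw [hspec]
    rw [Matrix.mul_sub, Matrix.sub_mul, Matrix.mul_sub, Matrix.sub_mul]
    rw [Matrix.mul_smul, Matrix.smul_mul, Matrix.mul_one, Matrix.mul_smul, Matrix.smul_mul]
    congr 1
    · congr 1
      rw [hUU]
    · congr 1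
      calc U * D * star U * (U * D * star U)
          = U * (D * ((star U * U) * (D * star U))) := by
            simp only [Matrix.mul_assoc]
        _ = U * (D * D) * star U := by
            rw [hUU', Matrix.one_mul]
            simp only [Matrix.mul_assoc]
  rw [key]
  rw [Matrix.det_mul, Matrix.det_mul]
  have hdetU : U.det * (star U).det = 1 := by
    rw [← Matrix.det_mul, hUU, Matrix.det_one]
  have : U.det * (t • (1 : Matrix (Fin n) (Fin n) ℝ) - D - s • (D * D)).det * (star U).det
      = (t • (1 : Matrix (Fin n) (Fin n) ℝ) - D - s • (D * D)).det * (U.det * (star U).det) := by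
    ring
  rw [this, hdetU, mul_one]
  have hdiag : t • (1 : Matrix (Fin n) (Fin n) ℝ) - D - s • (D * D)
      = Matrix.diagonal (fun i => t - hA.eigenvalues i - s * hA.eigenvalues i ^ 2) := by
    ext i j
    rcases eq_or_ne i j with rfl | hij
    · simp [hD, Matrix.diagonal_mul_diagonal, Matrix.one_apply, sq]
    · simp [hD, Matrix.diagonal_mul_diagonal, Matrix.one_apply, hij,
        Matrix.diagonal_apply_ne _ hij]
  rw [hdiag, Matrix.det_diagonal]

/-- Let `S` be a signed graph on `n` vertices with eigenvalues `θ₁, …, θ_n` (with multiplicity)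
and let `p, q ≥ 1`.  For every real `t` with `tI − A(K_{p,q},+)` invertible, the adjacency
matrix `A` of `S ⋆ₛ (K_{p,q},+)` satisfies
`det(tI − A) = t^{n(p+q−2)} · ∏ᵢ ((t² − pq)(t − θᵢ) − ((p+q)t + 2pq)θᵢ²)`. -/
theorem det_corona_posKpq {n p q : ℕ}
    (A₀ : Matrix (Fin n) (Fin n) ℝ) (h₀ : IsSignedAdj A₀)
    (hp : 1 ≤ p) (hq : 1 ≤ q) (t : ℝ)
    (hinv : IsUnit (t • (1 : Matrix (Fin p ⊕ Fin q) (Fin p ⊕ Fin q) ℝ) - posKpq p q).det) :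
    (t • (1 : Matrix (Fin n ⊕ (Fin p ⊕ Fin q) × Fin n)
          (Fin n ⊕ (Fin p ⊕ Fin q) × Fin n) ℝ) - coronaAdj A₀ (posKpq p q)).det
      = t ^ (n * (p + q - 2)) *
        ∏ i, ((t ^ 2 - (p : ℝ) * q) * (t - h₀.1.eigenvalues i)
            - (((p : ℝ) + q) * t + 2 * p * q) * (h₀.1.eigenvalues i) ^ 2) := by
  have hdetM : (t • (1 : Matrix (Fin p ⊕ Fin q) (Fin p ⊕ Fin q) ℝ) - posKpq p q).det
      = t ^ (p + q - 2) * (t ^ 2 - p * q) := det_posKpq hp hq t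
  have hne : t ^ 2 - (p:ℝ) * q ≠ 0 := by
    intro h
    rw [hdetM, h, mul_zero] at hinv
    exact hinv.ne_zero rfl
  have hs := sum_inv_posKpq t hne hinv
  -- block decomposition
  have hblock : t • (1 : Matrix (Fin n ⊕ (Fin p ⊕ Fin q) × Fin n)
          (Fin n ⊕ (Fin p ⊕ Fin q) × Fin n) ℝ) - coronaAdj A₀ (posKpq p q)
      = Matrix.fromBlocks (t • (1 : Matrix (Fin n) (Fin n) ℝ) - A₀)
          (-(Matrix.of fun i (p' : (Fin p ⊕ Fin q) × Fin n) => A₀ i p'.2))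
          (-(Matrix.of fun (p' : (Fin p ⊕ Fin q) × Fin n) j => A₀ p'.2 j))
          ((t • (1 : Matrix (Fin p ⊕ Fin q) (Fin p ⊕ Fin q) ℝ) - posKpq p q)
            ⊗ₖ (1 : Matrix (Fin n) (Fin n) ℝ)) := by
    rw [coronaAdj, sub_kron_one]
    ext (i | p') (j | q') <;>
      simp [Matrix.sub_apply, Matrix.one_apply, Prod.ext_iff]
  have hdetD : ((t • (1 : Matrix (Fin p ⊕ Fin q) (Fin p ⊕ Fin q) ℝ) - posKpq p q)
        ⊗ₖ (1 : Matrix (Fin n) (Fin n) ℝ)).det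
      = (t • (1 : Matrix (Fin p ⊕ Fin q) (Fin p ⊕ Fin q) ℝ) - posKpq p q).det ^ n := by
    rw [Matrix.det_kronecker]
    simp
  have hDinv : Invertible ((t • (1 : Matrix (Fin p ⊕ Fin q) (Fin p ⊕ Fin q) ℝ) - posKpq p q)
      ⊗ₖ (1 : Matrix (Fin n) (Fin n) ℝ)) :=
    Matrix.invertibleOfIsUnitDet _ (by rw [hdetD]; exact hinv.pow n)
  rw [hblock, Matrix.det_fromBlocks₂₂, Matrix.invOf_eq_nonsing_inv, Matrix.inv_kronecker,
    inv_one]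
  simp only [Matrix.neg_mul, Matrix.mul_neg, neg_neg]
  rw [corner_prod, hs, hdetD, hdetM, det_shift h₀.1]
  rw [mul_pow, ← pow_mul, Nat.mul_comm (p + q - 2) n, mul_assoc]
  congr 1
  have hc : (t ^ 2 - (p:ℝ) * q) ^ n = ∏ _i : Fin n, (t ^ 2 - (p:ℝ) * q) := by
    simp [Finset.prod_const]
  rw [hc, ← Finset.prod_mul_distrib]
  apply Finset.prod_congr rfl
  intro i _
  field_simp
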